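/- arXiv:1911.05272 — 5 statements merged into one kernel-verified Lean document; each statement's English description precedes it below -/
import Mathlib

section
/- For all real numbers a > 0 and b, the integral ∫₀^∞ x² · exp(-a x²) · sinh(b x) dx equals (√π · (2a + b²) · exp(b²/(4a)) · erf(b/(2√a))) / (8 a^{5/2}) + b / (4 a²). -/
open Real MeasureTheory Set Filter Topology

noncomputable def erf (z : ℝ) : ℝ := 2 / Real.sqrt π * ∫ u in (0:ℝ)..z, Real.exp (-u ^ 2)

lemma erf_hasDerivAt (z : ℝ) :
    HasDerivAt erf (2 / Real.sqrt π * Real.exp (-z ^ 2)) z := by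
  have hc : Continuous fun u : ℝ => Real.exp (-u ^ 2) := by continuity
  have h := (intervalIntegral.integral_hasDerivAt_right
    (hc.intervalIntegrable 0 z) (hc.stronglyMeasurableAtFilter _ _) hc.continuousAt)
  exact (h.const_mul (2 / Real.sqrt π))

lemma erf_tendsto : Tendsto erf atTop (𝓝 1) := by
  have hc : Continuous fun u : ℝ => Real.exp (-u ^ 2) := by continuity
  have hi : IntegrableOn (fun u : ℝ => Real.exp (-u ^ 2)) (Ioi 0) := by
    have := integrable_exp_neg_mul_sq (one_pos)
    simpa using this.integrableOn
  have h := intervalIntegral_tendsto_integral_Ioi 0 hi tendsto_id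
  have h2 : (∫ u in Ioi (0:ℝ), Real.exp (-u ^ 2)) = Real.sqrt π / 2 := by
    have := integral_gaussian_Ioi 1
    simpa using this
  rw [h2] at h
  have h3 := h.const_mul (2 / Real.sqrt π)
  have hπ : Real.sqrt π ≠ 0 := by positivity
  have : 2 / Real.sqrt π * (Real.sqrt π / 2) = 1 := by field_simp
  rw [this] at h3
  exact h3

lemma erf_neg (z : ℝ) : erf (-z) = - erf z := by
  unfold erf
  have key : (∫ u in (0:ℝ)..(-z), Real.exp (-u ^ 2)) = - ∫ u in (0:ℝ)..z, Real.exp (-u ^ 2) := by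
    have h1 := intervalIntegral.integral_comp_neg (a := (0:ℝ)) (b := z) (fun u => Real.exp (-u ^ 2))
    simp only [neg_zero] at h1
    have h2 : (∫ u in (0:ℝ)..z, Real.exp (-(-u) ^ 2)) = ∫ u in (0:ℝ)..z, Real.exp (-u ^ 2) := by
      apply intervalIntegral.integral_congr; intro u _; ring_nf
    rw [h2] at h1
    rw [h1, intervalIntegral.integral_symm]
  rw [key]; ring

noncomputable def P (a m x : ℝ) : ℝ :=
  -(x - m) * Real.exp (-a * (x - m) ^ 2) / (2 * a) - m * Real.exp (-a * (x - m) ^ 2) / a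
  + (1 / (2 * a) + m ^ 2) * (Real.sqrt π / (2 * Real.sqrt a)) * erf (Real.sqrt a * (x - m))

lemma hasDerivAt_P {a : ℝ} (ha : 0 < a) (m x : ℝ) :
    HasDerivAt (P a m) (x ^ 2 * Real.exp (-a * (x - m) ^ 2)) x := by
  have hsa : Real.sqrt a ≠ 0 := by positivity
  have hsπ : Real.sqrt π ≠ 0 := by positivity
  have hs : Real.sqrt a * Real.sqrt a = a := Real.mul_self_sqrt ha.le
  have ht : HasDerivAt (fun x : ℝ => x - m) 1 x := (hasDerivAt_id x).sub_const m
  have hq : HasDerivAt (fun x : ℝ => -a * (x - m) ^ 2)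
      (-a * ((2:ℕ) * (x - m) ^ 1 * 1)) x := (ht.pow 2).const_mul (-a)
  have he : HasDerivAt (fun x : ℝ => Real.exp (-a * (x - m) ^ 2))
      (Real.exp (-a * (x - m) ^ 2) * (-a * ((2:ℕ) * (x - m) ^ 1 * 1))) x := hq.exp
  have h1 := (ht.neg.mul he).div_const (2 * a)
  have h2 := (he.const_mul m).div_const a
  have harg : HasDerivAt (fun x : ℝ => Real.sqrt a * (x - m)) (Real.sqrt a * 1) x :=
    ht.const_mul _
  have herf : HasDerivAt (fun x : ℝ => erf (Real.sqrt a * (x - m)))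
      (2 / Real.sqrt π * Real.exp (-(Real.sqrt a * (x - m)) ^ 2) * (Real.sqrt a * 1)) x :=
    (erf_hasDerivAt _).comp x harg
  have h3 := herf.const_mul ((1 / (2 * a) + m ^ 2) * (Real.sqrt π / (2 * Real.sqrt a)))
  have htot := (h1.sub h2).add h3
  have hexp : -(Real.sqrt a * (x - m)) ^ 2 = -a * (x - m) ^ 2 := by
    rw [mul_pow, Real.sq_sqrt ha.le]; ring
  rw [hexp] at htot
  refine htot.congr_deriv (Eq.symm ?_)
  simp only [Pi.neg_apply]
  field_simp
  ring

lemma tendsto_mul_exp {a : ℝ} (ha : 0 < a) :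
    Tendsto (fun t : ℝ => t * Real.exp (-a * t ^ 2)) atTop (𝓝 0) := by
  have h := (rpow_mul_exp_neg_mul_sq_isLittleO_exp_neg ha 1).tendsto_zero_of_tendsto
    (tendsto_exp_atBot.comp <| tendsto_id.const_mul_atTop_of_neg
      (neg_lt_zero.mpr one_half_pos))
  refine h.congr' ?_
  filter_upwards [eventually_gt_atTop (0:ℝ)] with t ht
  rw [Real.rpow_one]

lemma tendsto_P {a : ℝ} (ha : 0 < a) (m : ℝ) :
    Tendsto (P a m) atTop
      (𝓝 ((1 / (2 * a) + m ^ 2) * (Real.sqrt π / (2 * Real.sqrt a)))) := by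
  have htm : Tendsto (fun x : ℝ => x - m) atTop atTop :=
    tendsto_atTop_add_const_right atTop (-m) tendsto_id
  have hA : Tendsto (fun x : ℝ => (x - m) * Real.exp (-a * (x - m) ^ 2)) atTop (𝓝 0) :=
    (tendsto_mul_exp ha).comp htm
  have hB : Tendsto (fun x : ℝ => Real.exp (-a * (x - m) ^ 2)) atTop (𝓝 0) := by
    apply Real.tendsto_exp_atBot.comp
    have hsq : Tendsto (fun x : ℝ => a * (x - m) ^ 2) atTop atTop := by
      apply Tendsto.const_mul_atTop ha
      have := htm.atTop_mul_atTop₀ htm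
      refine this.congr fun x => ?_
      ring
    simpa using (tendsto_neg_atBot_iff.mpr hsq)
  have hC : Tendsto (fun x : ℝ => erf (Real.sqrt a * (x - m))) atTop (𝓝 1) := by
    apply erf_tendsto.comp
    exact htm.const_mul_atTop (Real.sqrt_pos.mpr ha)
  have hcomb := (((hA.neg.div_const (2 * a)).sub ((hB.const_mul m).div_const a)).add
    (hC.const_mul ((1 / (2 * a) + m ^ 2) * (Real.sqrt π / (2 * Real.sqrt a)))))
  have h0 : -(0:ℝ) / (2 * a) - m * 0 / a
      + (1 / (2 * a) + m ^ 2) * (Real.sqrt π / (2 * Real.sqrt a)) * 1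
      = (1 / (2 * a) + m ^ 2) * (Real.sqrt π / (2 * Real.sqrt a)) := by ring
  rw [h0] at hcomb
  refine hcomb.congr fun x => ?_
  unfold P
  ring

lemma integrable_f {a : ℝ} (ha : 0 < a) (b : ℝ) :
    IntegrableOn (fun x : ℝ => x ^ 2 * Real.exp (-a * x ^ 2) * Real.sinh (b * x))
      (Ioi 0) := by
  have ha2 : 0 < a / 2 := half_pos ha
  have hg : IntegrableOn (fun x : ℝ => x ^ 2 * Real.exp (-(a / 2) * x ^ 2)) (Ioi 0) := by
    have := integrableOn_rpow_mul_exp_neg_mul_sq ha2 (s := 2) (by norm_num)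
    refine this.congr_fun (fun x hx => ?_) measurableSet_Ioi
    dsimp only
    rw [show ((2:ℝ) = ((2:ℕ):ℝ)) by norm_num, Real.rpow_natCast]
  have hg' : IntegrableOn
      (fun x : ℝ => Real.exp (b ^ 2 / (2 * a)) * (x ^ 2 * Real.exp (-(a / 2) * x ^ 2)))
      (Ioi 0) := hg.const_mul _
  refine Integrable.mono' hg' ?_ ?_
  · exact (Continuous.aestronglyMeasurable (by continuity)).restrict
  · rw [ae_restrict_iff' measurableSet_Ioi]
    filter_upwards with x hx
    have hx0 : 0 ≤ x := (le_of_lt hx)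
    have h1 : |Real.sinh (b * x)| ≤ Real.exp (|b| * x) := by
      rw [Real.abs_sinh]
      calc Real.sinh |b * x| ≤ Real.exp |b * x| := by
            rw [Real.sinh_eq]
            have := Real.exp_pos (-|b * x|)
            linarith [Real.exp_pos (-|b * x|), Real.exp_pos (|b * x|)]
        _ = Real.exp (|b| * x) := by rw [abs_mul, abs_of_nonneg hx0]
    have h2 : Real.exp (-a * x ^ 2) * Real.exp (|b| * x)
        ≤ Real.exp (b ^ 2 / (2 * a)) * Real.exp (-(a / 2) * x ^ 2) := by
      rw [← Real.exp_add, ← Real.exp_add]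
      apply Real.exp_le_exp.mpr
      have key : b ^ 2 / (2 * a) + -(a / 2) * x ^ 2 - (-a * x ^ 2 + |b| * x)
          = (a * x - |b|) ^ 2 / (2 * a) := by
        field_simp
        ring_nf
        rw [sq_abs]
        ring
      nlinarith [div_nonneg (sq_nonneg (a * x - |b|)) (by linarith : (0:ℝ) ≤ 2 * a)]
    calc ‖x ^ 2 * Real.exp (-a * x ^ 2) * Real.sinh (b * x)‖
        = x ^ 2 * Real.exp (-a * x ^ 2) * |Real.sinh (b * x)| := by
          rw [norm_mul, norm_mul]
          simp [Real.norm_eq_abs, abs_of_nonneg (Real.exp_pos _).le,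
            abs_of_nonneg (pow_nonneg hx0 2)]
      _ ≤ x ^ 2 * (Real.exp (-a * x ^ 2) * Real.exp (|b| * x)) := by
          rw [mul_assoc]
          apply mul_le_mul_of_nonneg_left _ (pow_nonneg hx0 2)
          exact mul_le_mul_of_nonneg_left h1 (Real.exp_pos _).le
      _ ≤ x ^ 2 * (Real.exp (b ^ 2 / (2 * a)) * Real.exp (-(a / 2) * x ^ 2)) := by
          apply mul_le_mul_of_nonneg_left h2 (pow_nonneg hx0 2)
      _ = Real.exp (b ^ 2 / (2 * a)) * (x ^ 2 * Real.exp (-(a / 2) * x ^ 2)) := by ring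

theorem stmt1 (a b : ℝ) (ha : 0 < a) :
    ∫ x in Ioi (0 : ℝ), x ^ 2 * Real.exp (-a * x ^ 2) * Real.sinh (b * x) =
      Real.sqrt π * (2 * a + b ^ 2) * Real.exp (b ^ 2 / (4 * a)) *
          erf (b / (2 * Real.sqrt a)) / (8 * a ^ ((5 : ℝ) / 2)) +
        b / (4 * a ^ 2) := by
  have hsa0 : (0:ℝ) < Real.sqrt a := Real.sqrt_pos.mpr ha
  have hs : Real.sqrt a * Real.sqrt a = a := Real.mul_self_sqrt ha.le
  have ha' : a ≠ 0 := ha.ne'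
  set m := b / (2 * a) with hm
  set E := Real.exp (b ^ 2 / (4 * a)) with hE
  have hderiv : ∀ x ∈ Ici (0:ℝ),
      HasDerivAt (fun x => E / 2 * (P a m x - P a (-m) x))
        (x ^ 2 * Real.exp (-a * x ^ 2) * Real.sinh (b * x)) x := by
    intro x _
    have h := ((hasDerivAt_P ha m x).sub (hasDerivAt_P ha (-m) x)).const_mul (E / 2)
    refine h.congr_deriv (Eq.symm ?_)
    have e1 : E * Real.exp (-a * (x - m) ^ 2)
        = Real.exp (-a * x ^ 2) * Real.exp (b * x) := by
      rw [hE, ← Real.exp_add, ← Real.exp_add]; congr 1; rw [hm]; field_simp; ring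
    have e2 : E * Real.exp (-a * (x - -m) ^ 2)
        = Real.exp (-a * x ^ 2) * Real.exp (-(b * x)) := by
      rw [hE, ← Real.exp_add, ← Real.exp_add]; congr 1; rw [hm]; field_simp; ring
    rw [Real.sinh_eq]
    linear_combination (x ^ 2 / 2) * e2 - (x ^ 2 / 2) * e1
  have htend : Tendsto (fun x => E / 2 * (P a m x - P a (-m) x)) atTop (𝓝 0) := by
    have h := ((tendsto_P ha m).sub (tendsto_P ha (-m))).const_mul (E / 2)
    convert h using 2
    rw [neg_pow]
    ring
  have hI := integral_Ioi_of_hasDerivAt_of_tendsto' hderiv (integrable_f ha b) htend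
  rw [hI]
  have harg1 : Real.sqrt a * ((0:ℝ) - m) = -(b / (2 * Real.sqrt a)) := by
    rw [hm]; field_simp; linear_combination (-b) * hs
  have harg2 : Real.sqrt a * ((0:ℝ) - -m) = b / (2 * Real.sqrt a) := by
    rw [hm]; field_simp; linear_combination b * hs
  have hexp1 : -a * ((0:ℝ) - m) ^ 2 = -(b ^ 2 / (4 * a)) := by
    rw [hm]; field_simp; ring
  have hexp2 : -a * ((0:ℝ) - -m) ^ 2 = -(b ^ 2 / (4 * a)) := by
    rw [hm]; field_simp; ring
  have hX : Real.exp (-(b ^ 2 / (4 * a))) = 1 / E := by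
    rw [hE, eq_div_iff (Real.exp_ne_zero _), ← Real.exp_add]
    simp
  have h52 : a ^ ((5:ℝ) / 2) = a ^ 2 * Real.sqrt a := by
    rw [show ((5:ℝ)/2) = ((2:ℕ):ℝ) + (1/2 : ℝ) by norm_num, Real.rpow_add ha,
      Real.rpow_natCast, Real.sqrt_eq_rpow]
  have hE0 : E ≠ 0 := Real.exp_ne_zero _
  have hsπ : Real.sqrt π ≠ 0 := by positivity
  unfold P
  rw [harg1, harg2, erf_neg, hexp1, hexp2, hX, h52, hm]
  field_simp
  ring_nf
end

section
/- For all real numbers a > 0 and b, the integral ∫₀^∞ x³ · exp(-a x²) · sinh(b x) dx equals √π · b · (6a + b²) · exp(b²/(4a)) / (16 a^{7/2}). -/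
open Real MeasureTheory Set Filter Topology

lemma ipow {a : ℝ} (ha : 0 < a) (n : ℕ) :
    Integrable (fun x : ℝ => x ^ n * Real.exp (-a * x ^ 2)) := by
  have h : (-1 : ℝ) < n := by
    have := Nat.cast_nonneg (α := ℝ) n; linarith
  simpa [Real.rpow_natCast] using integrable_rpow_mul_exp_neg_mul_sq ha h

lemma odd1 {a : ℝ} : ∫ x : ℝ, x * Real.exp (-a * x ^ 2) = 0 := by
  have h := MeasureTheory.integral_neg_eq_self (fun x : ℝ => x * Real.exp (-a * x ^ 2)) volume
  simp only [neg_mul, neg_sq] at h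
  have : ∫ x : ℝ, -(x * Real.exp (-(a * x ^ 2))) = - ∫ x : ℝ, x * Real.exp (-(a * x ^ 2)) :=
    integral_neg _
  rw [this] at h
  simp only [neg_mul] at h ⊢
  linarith

lemma odd3 {a : ℝ} : ∫ x : ℝ, x ^ 3 * Real.exp (-a * x ^ 2) = 0 := by
  have h := MeasureTheory.integral_neg_eq_self (fun x : ℝ => x ^ 3 * Real.exp (-a * x ^ 2)) volume
  have e : ∀ x : ℝ, (-x) ^ 3 * Real.exp (-a * (-x) ^ 2) = -(x ^ 3 * Real.exp (-a * x ^ 2)) := by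
    intro x; rw [neg_sq]; ring
  simp only [e, integral_neg] at h
  linarith

lemma M2 {a : ℝ} (ha : 0 < a) :
    ∫ x : ℝ, x ^ 2 * Real.exp (-a * x ^ 2) = Real.sqrt (π / a) / (2 * a) := by
  set g : ℝ → ℝ := fun x => x * Real.exp (-a * x ^ 2) with hg
  set g' : ℝ → ℝ := fun x => Real.exp (-a * x ^ 2) - 2 * a * (x ^ 2 * Real.exp (-a * x ^ 2))
    with hg'
  have hderiv : ∀ x : ℝ, HasDerivAt g (g' x) x := by
    intro x
    have h1 : HasDerivAt (fun x : ℝ => Real.exp (-a * x ^ 2))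
        (Real.exp (-a * x ^ 2) * (-a * (2 * x))) x := by
      have := ((hasDerivAt_pow 2 x).const_mul (-a)).exp
      simpa using this
    have := (hasDerivAt_id x).mul h1
    refine this.congr_deriv ?_
    simp [g']; ring
  have hint : Integrable g' := by
    have h0 : Integrable (fun x : ℝ => Real.exp (-a * x ^ 2)) := by simpa using ipow ha 0
    exact h0.sub ((ipow ha 2).const_mul (2 * a))
  have htend : Tendsto g atTop (𝓝 0) ∧ Tendsto g atBot (𝓝 0) := by
    have hc : Tendsto (fun x : ℝ => |x| ^ (1 : ℝ) * Real.exp (-a * x ^ 2)) (Filter.cocompact ℝ)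
        (𝓝 0) := tendsto_rpow_abs_mul_exp_neg_mul_sq_cocompact ha 1
    rw [cocompact_eq_atBot_atTop] at hc
    have habs : ∀ x : ℝ, |g x| = |x| ^ (1 : ℝ) * Real.exp (-a * x ^ 2) := by
      intro x
      rw [Real.rpow_one, hg]
      rw [abs_mul, abs_of_pos (Real.exp_pos _)]
    constructor
    · rw [tendsto_zero_iff_abs_tendsto_zero]
      exact (hc.mono_left le_sup_right).congr (fun x => (habs x).symm)
    · rw [tendsto_zero_iff_abs_tendsto_zero]
      exact (hc.mono_left le_sup_left).congr (fun x => (habs x).symm)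
  have hIoi : ∫ x in Ioi (0:ℝ), g' x = 0 - g 0 :=
    integral_Ioi_of_hasDerivAt_of_tendsto' (fun x _ => hderiv x) hint.integrableOn htend.1
  have hIic : ∫ x in Iic (0:ℝ), g' x = g 0 - 0 :=
    integral_Iic_of_hasDerivAt_of_tendsto (hderiv 0).continuousAt.continuousWithinAt
      (fun x _ => hderiv x) hint.integrableOn htend.2
  have hsplit : ∫ x : ℝ, g' x = (∫ x in Iic (0:ℝ), g' x) + ∫ x in Ioi (0:ℝ), g' x := by
    rw [← integral_add_compl (measurableSet_Ioi (a := (0:ℝ))) hint, compl_Ioi]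
    ring
  have hzero : ∫ x : ℝ, g' x = 0 := by
    rw [hsplit, hIoi, hIic]; simp [g]
  have hsub : ∫ x : ℝ, g' x =
      (∫ x : ℝ, Real.exp (-a * x ^ 2)) - 2 * a * ∫ x : ℝ, x ^ 2 * Real.exp (-a * x ^ 2) := by
    rw [hg']
    rw [integral_sub (by simpa using ipow ha 0) ((ipow ha 2).const_mul (2 * a)),
      integral_const_mul]
  rw [hzero, integral_gaussian] at hsub
  have h2a : (2 * a) ≠ 0 := by positivity
  field_simp at hsub ⊢
  linarith

lemma key {a : ℝ} (b : ℝ) (ha : 0 < a) :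
    ∫ x : ℝ, x ^ 3 * Real.exp (-a * x ^ 2 + b * x) =
      (3 * (b / (2 * a)) * (Real.sqrt (π / a) / (2 * a)) +
        (b / (2 * a)) ^ 3 * Real.sqrt (π / a)) * Real.exp (b ^ 2 / (4 * a)) := by
  set c : ℝ := b / (2 * a) with hc
  have htrans := MeasureTheory.integral_add_right_eq_self (μ := volume)
    (fun x : ℝ => x ^ 3 * Real.exp (-a * x ^ 2 + b * x)) c
  rw [← htrans]
  have hK : ∀ x : ℝ, (x + c) ^ 3 * Real.exp (-a * (x + c) ^ 2 + b * (x + c)) =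
      Real.exp (b ^ 2 / (4 * a)) * (x ^ 3 * Real.exp (-a * x ^ 2) +
        (3 * c * (x ^ 2 * Real.exp (-a * x ^ 2)) +
        (3 * c ^ 2 * (x * Real.exp (-a * x ^ 2)) + c ^ 3 * Real.exp (-a * x ^ 2)))) := by
    intro x
    have harg : -a * (x + c) ^ 2 + b * (x + c) = -a * x ^ 2 + b ^ 2 / (4 * a) := by
      rw [hc]; field_simp; ring
    rw [harg, Real.exp_add]
    ring
  simp only [hK]
  rw [integral_const_mul]
  have i3 := ipow ha 3
  have i2 := (ipow ha 2).const_mul (3 * c)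
  have i1 : Integrable (fun x : ℝ => 3 * c ^ 2 * (x * Real.exp (-a * x ^ 2))) := by
    have := (ipow ha 1).const_mul (3 * c ^ 2); simpa using this
  have i0 : Integrable (fun x : ℝ => c ^ 3 * Real.exp (-a * x ^ 2)) := by
    have := (ipow ha 0).const_mul (c ^ 3); simpa using this
  have i10 : Integrable (fun x : ℝ => 3 * c ^ 2 * (x * Real.exp (-a * x ^ 2)) +
      c ^ 3 * Real.exp (-a * x ^ 2)) := i1.add i0
  have i210 : Integrable (fun x : ℝ => 3 * c * (x ^ 2 * Real.exp (-a * x ^ 2)) +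
      (3 * c ^ 2 * (x * Real.exp (-a * x ^ 2)) + c ^ 3 * Real.exp (-a * x ^ 2))) := i2.add i10
  rw [integral_add i3 i210, integral_add i2 i10, integral_add i1 i0,
    integral_const_mul, integral_const_mul, integral_const_mul, odd3, odd1, M2 ha,
    integral_gaussian]
  ring

lemma keyInt {a : ℝ} (b : ℝ) (ha : 0 < a) :
    Integrable (fun x : ℝ => x ^ 3 * Real.exp (-a * x ^ 2 + b * x)) := by
  set c : ℝ := b / (2 * a) with hc
  have hK : ∀ x : ℝ, (x + c) ^ 3 * Real.exp (-a * (x + c) ^ 2 + b * (x + c)) =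
      Real.exp (b ^ 2 / (4 * a)) * (x ^ 3 * Real.exp (-a * x ^ 2) +
        (3 * c * (x ^ 2 * Real.exp (-a * x ^ 2)) +
        (3 * c ^ 2 * (x * Real.exp (-a * x ^ 2)) + c ^ 3 * Real.exp (-a * x ^ 2)))) := by
    intro x
    have harg : -a * (x + c) ^ 2 + b * (x + c) = -a * x ^ 2 + b ^ 2 / (4 * a) := by
      rw [hc]; field_simp; ring
    rw [harg, Real.exp_add]
    ring
  have i1 : Integrable (fun x : ℝ => 3 * c ^ 2 * (x * Real.exp (-a * x ^ 2))) := by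
    have := (ipow ha 1).const_mul (3 * c ^ 2); simpa using this
  have i0 : Integrable (fun x : ℝ => c ^ 3 * Real.exp (-a * x ^ 2)) := by
    have := (ipow ha 0).const_mul (c ^ 3); simpa using this
  have hP : Integrable (fun x : ℝ => Real.exp (b ^ 2 / (4 * a)) *
      (x ^ 3 * Real.exp (-a * x ^ 2) + (3 * c * (x ^ 2 * Real.exp (-a * x ^ 2)) +
        (3 * c ^ 2 * (x * Real.exp (-a * x ^ 2)) + c ^ 3 * Real.exp (-a * x ^ 2))))) :=
    ((ipow ha 3).add (((ipow ha 2).const_mul (3 * c)).add (i1.add i0))).const_mul _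
  have := hP.comp_sub_right c
  refine this.congr (Filter.Eventually.of_forall fun x => ?_)
  beta_reduce
  rw [← hK (x - c)]
  simp

theorem stmt2 (a b : ℝ) (ha : 0 < a) :
    ∫ x in Ioi (0 : ℝ), x ^ 3 * Real.exp (-a * x ^ 2) * Real.sinh (b * x) =
      Real.sqrt π * b * (6 * a + b ^ 2) * Real.exp (b ^ 2 / (4 * a)) /
        (16 * a ^ ((7 : ℝ) / 2)) := by
  set F : ℝ → ℝ := fun x => x ^ 3 * Real.exp (-a * x ^ 2) * Real.sinh (b * x) with hF
  have hFeq : ∀ x, F x =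
      (x ^ 3 * Real.exp (-a * x ^ 2 + b * x) - x ^ 3 * Real.exp (-a * x ^ 2 + -b * x)) / 2 := by
    intro x
    rw [hF]
    beta_reduce
    rw [Real.sinh_eq, Real.exp_add, Real.exp_add, neg_mul]
    ring
  have hIb := keyInt b ha
  have hImb := keyInt (-b) ha
  have intF : Integrable F := by
    have := (hIb.sub hImb).div_const 2
    exact this.congr (Filter.Eventually.of_forall fun x => (hFeq x).symm)
  have heven : ∀ x, F (-x) = F x := by
    intro x
    rw [hF]
    beta_reduce
    rw [mul_neg, Real.sinh_neg, neg_sq]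
    ring
  have hIic : ∫ x in Iic (0 : ℝ), F x = ∫ x in Ioi (0 : ℝ), F x := by
    have h := integral_comp_neg_Ioi (0 : ℝ) F
    simp only [neg_zero] at h
    rw [← h]
    simp only [heven]
  have hsplit : (∫ x in Ioi (0 : ℝ), F x) + ∫ x in Iic (0 : ℝ), F x = ∫ x : ℝ, F x := by
    have := integral_add_compl (measurableSet_Ioi (a := (0 : ℝ))) intF
    rwa [compl_Ioi] at this
  have hR : ∫ x : ℝ, F x =
      ((∫ x : ℝ, x ^ 3 * Real.exp (-a * x ^ 2 + b * x)) -
        ∫ x : ℝ, x ^ 3 * Real.exp (-a * x ^ 2 + -b * x)) / 2 := by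
    simp only [hFeq]
    rw [integral_div, integral_sub hIb hImb]
  rw [key b ha, key (-b) ha] at hR
  have hhalf : ∫ x in Ioi (0 : ℝ), F x = (∫ x : ℝ, F x) / 2 := by
    rw [← hsplit, hIic]; ring
  rw [hhalf, hR]
  have hnb : (-b) ^ 2 / (4 * a) = b ^ 2 / (4 * a) := by ring
  rw [hnb]
  have hsa : Real.sqrt a ≠ 0 := by positivity
  have hsqdiv : Real.sqrt (π / a) = Real.sqrt π / Real.sqrt a :=
    Real.sqrt_div pi_pos.le a
  have hrpow : a ^ ((7 : ℝ) / 2) = a ^ 3 * Real.sqrt a := by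
    rw [show (7 : ℝ) / 2 = (3 : ℕ) + (1 / 2 : ℝ) by norm_num, Real.rpow_add ha,
      Real.rpow_natCast, ← Real.sqrt_eq_rpow]
  rw [hsqdiv, hrpow]
  have hane : a ≠ 0 := ha.ne'
  field_simp
  ring
end

section
/- For every real number a, the integral ∫₀^∞ x² · erf(a x / √2) · exp(-x²/2) dx equals √(2/π) · ( a/(a² + 1) + arctan(a) ). -/
open Real MeasureTheory Set Filter Topology

lemma erf_continuous : Continuous erf := by
  have h : Differentiable ℝ erf := fun z => (erf_hasDerivAt z).differentiableAt
  exact h.continuous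

lemma abs_erf_le (z : ℝ) : |erf z| ≤ 2 / Real.sqrt π * |z| := by
  have h : ∀ u ∈ Set.uIoc (0:ℝ) z, ‖Real.exp (-u ^ 2)‖ ≤ 1 := by
    intro u _
    rw [Real.norm_eq_abs, abs_of_pos (Real.exp_pos _)]
    exact Real.exp_le_one_iff.mpr (neg_nonpos.mpr (sq_nonneg u))
  have h2 := intervalIntegral.norm_integral_le_of_norm_le_const h
  rw [erf, abs_mul, abs_of_nonneg (by positivity : (0:ℝ) ≤ 2 / Real.sqrt π)]
  have := h2
  simp only [one_mul, sub_zero] at this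
  exact mul_le_mul_of_nonneg_left this (by positivity)

lemma integral_x3 {b : ℝ} (hb : 0 < b) :
    ∫ x in Ioi (0:ℝ), x ^ 3 * Real.exp (-b * x ^ 2) = 1 / (2 * b ^ 2) := by
  have hint : IntegrableOn (fun x : ℝ => x ^ 3 * Real.exp (-b * x ^ 2)) (Ioi 0) := by
    have h := integrableOn_rpow_mul_exp_neg_mul_sq hb (s := 3) (by norm_num)
    refine h.congr_fun (fun x _ => ?_) measurableSet_Ioi
    beta_reduce
    rw [show (3:ℝ) = ((3:ℕ):ℝ) by norm_num, Real.rpow_natCast]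
  set g : ℝ → ℝ := fun x => -(x ^ 2 / (2 * b) + 1 / (2 * b ^ 2)) * Real.exp (-b * x ^ 2) with hg
  have hderiv : ∀ x ∈ Ioi (0:ℝ), HasDerivAt g (x ^ 3 * Real.exp (-b * x ^ 2)) x := by
    intro x _
    have h1 : HasDerivAt (fun x : ℝ => -(x ^ 2 / (2 * b) + 1 / (2 * b ^ 2)))
        (-(2 * x / (2 * b))) x := by
      have := (((hasDerivAt_pow 2 x).div_const (2 * b)).add_const (1 / (2 * b ^ 2))).neg
      exact this.congr_deriv (by norm_num)
    have h2 : HasDerivAt (fun x : ℝ => Real.exp (-b * x ^ 2))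
        (Real.exp (-b * x ^ 2) * (-b * (2 * x))) x := by
      have hin : HasDerivAt (fun x : ℝ => -b * x ^ 2) (-b * (2 * x)) x := by
        have := (hasDerivAt_pow 2 x).const_mul (-b)
        simpa [mul_comm] using this
      exact (Real.hasDerivAt_exp _).comp x hin
    have := h1.mul h2
    refine this.congr_deriv ?_
    have hb0 : b ≠ 0 := hb.ne'
    field_simp
    ring
  have h1 : Tendsto (fun x : ℝ => x ^ 2 * Real.exp (-b * x ^ 2)) atTop (𝓝 0) := by
    have hbx : Tendsto (fun x : ℝ => b * x ^ 2) atTop atTop :=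
      (tendsto_pow_atTop two_ne_zero).const_mul_atTop hb
    have h := ((tendsto_pow_mul_exp_neg_atTop_nhds_zero 1).comp hbx).const_mul (1 / b)
    rw [mul_zero] at h
    refine h.congr fun x => ?_
    simp only [Function.comp_apply, pow_one, neg_mul]
    field_simp
  have h0 : Tendsto (fun x : ℝ => Real.exp (-b * x ^ 2)) atTop (𝓝 0) := by
    have hbx : Tendsto (fun x : ℝ => b * x ^ 2) atTop atTop :=
      (tendsto_pow_atTop two_ne_zero).const_mul_atTop hb
    refine (Real.tendsto_exp_atBot.comp (tendsto_neg_atTop_atBot.comp hbx)).congr fun x => ?_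
    simp [Function.comp, neg_mul]
  have htend : Tendsto g atTop (𝓝 0) := by
    have h := ((h1.const_mul (1 / (2 * b))).add (h0.const_mul (1 / (2 * b ^ 2)))).neg
    simp only [mul_zero, add_zero, neg_zero] at h
    refine h.congr fun x => ?_
    simp only [hg]
    ring
  have hcont : ContinuousWithinAt g (Ici 0) 0 := by
    apply Continuous.continuousWithinAt
    fun_prop
  have := integral_Ioi_of_hasDerivAt_of_tendsto hcont hderiv hint htend
  rw [this]
  simp [hg]

attribute [fun_prop] erf_continuous

lemma exp_half_eq (x : ℝ) : Real.exp (-x ^ 2 / 2) = Real.exp (-(1/2 : ℝ) * x ^ 2) := by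
  congr 1; ring

lemma integrableOn_x3_exp : IntegrableOn (fun x : ℝ => x ^ 3 * Real.exp (-x ^ 2 / 2)) (Ioi 0) := by
  have h := integrableOn_rpow_mul_exp_neg_mul_sq (b := 1/2) (by norm_num) (s := 3) (by norm_num)
  refine h.congr_fun (fun x _ => ?_) measurableSet_Ioi
  beta_reduce
  rw [show (3:ℝ) = ((3:ℕ):ℝ) by norm_num, Real.rpow_natCast, ← exp_half_eq]

lemma F_hasDerivAt (a : ℝ) :
    HasDerivAt (fun a : ℝ => ∫ x in Ioi (0:ℝ),
        x ^ 2 * erf (a * x / Real.sqrt 2) * Real.exp (-x ^ 2 / 2))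
      (Real.sqrt (2 / π) * (2 / (a ^ 2 + 1) ^ 2)) a := by
  have hπ : (0:ℝ) < Real.sqrt π := Real.sqrt_pos.mpr Real.pi_pos
  have h2 : (0:ℝ) < Real.sqrt 2 := Real.sqrt_pos.mpr (by norm_num)
  have hsq2 : (Real.sqrt 2) ^ 2 = 2 := Real.sq_sqrt (by norm_num)
  set F' : ℝ → ℝ → ℝ := fun a x =>
    x ^ 2 * (2 / Real.sqrt π * Real.exp (-(a * x / Real.sqrt 2) ^ 2) * (x / Real.sqrt 2)) *
      Real.exp (-x ^ 2 / 2) with hF'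
  have hderiv : ∀ x : ℝ, ∀ a' : ℝ,
      HasDerivAt (fun a : ℝ => x ^ 2 * erf (a * x / Real.sqrt 2) * Real.exp (-x ^ 2 / 2))
        (F' a' x) a' := by
    intro x a'
    have hlin : HasDerivAt (fun a : ℝ => a * x / Real.sqrt 2) (x / Real.sqrt 2) a' := by
      simpa using (hasDerivAt_mul_const x).div_const (Real.sqrt 2) (x := a')
    have herf := (erf_hasDerivAt (a' * x / Real.sqrt 2)).comp a' hlin
    have := (herf.const_mul (x ^ 2)).mul_const (Real.exp (-x ^ 2 / 2))
    exact this
  have hmeas : ∀ a : ℝ, AEStronglyMeasurable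
      (fun x : ℝ => x ^ 2 * erf (a * x / Real.sqrt 2) * Real.exp (-x ^ 2 / 2))
      (volume.restrict (Ioi 0)) := by
    intro a
    apply Continuous.aestronglyMeasurable
    fun_prop
  have hint : Integrable (fun x : ℝ => x ^ 2 * erf (a * x / Real.sqrt 2) * Real.exp (-x ^ 2 / 2))
      (volume.restrict (Ioi 0)) := by
    refine Integrable.mono' ((integrableOn_x3_exp.const_mul (2 / Real.sqrt π * (|a| / Real.sqrt 2)))) (hmeas a) ?_
    filter_upwards [ae_restrict_mem measurableSet_Ioi] with x hx
    have hx0 : (0:ℝ) < x := hx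
    rw [Real.norm_eq_abs, abs_mul, abs_mul]
    have h1 : |erf (a * x / Real.sqrt 2)| ≤ 2 / Real.sqrt π * (|a| * x / Real.sqrt 2) := by
      have := abs_erf_le (a * x / Real.sqrt 2)
      rwa [abs_div, abs_mul, abs_of_pos h2, abs_of_pos hx0] at this
    calc |x ^ 2| * |erf (a * x / Real.sqrt 2)| * |Real.exp (-x ^ 2 / 2)|
        ≤ x ^ 2 * (2 / Real.sqrt π * (|a| * x / Real.sqrt 2)) * Real.exp (-x ^ 2 / 2) := by
          rw [abs_of_nonneg (sq_nonneg x), abs_of_pos (Real.exp_pos _)]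
          apply mul_le_mul_of_nonneg_right _ (Real.exp_pos _).le
          exact mul_le_mul_of_nonneg_left h1 (sq_nonneg x)
      _ = 2 / Real.sqrt π * (|a| / Real.sqrt 2) * (x ^ 3 * Real.exp (-x ^ 2 / 2)) := by ring
  have hF'meas : AEStronglyMeasurable (F' a) (volume.restrict (Ioi 0)) := by
    apply Continuous.aestronglyMeasurable
    fun_prop
  set bound : ℝ → ℝ := fun x => 2 / (Real.sqrt π * Real.sqrt 2) * (x ^ 3 * Real.exp (-x ^ 2 / 2))
    with hbound
  have hboundint : Integrable bound (volume.restrict (Ioi 0)) :=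
    integrableOn_x3_exp.const_mul _
  have hb : ∀ᵐ x ∂(volume.restrict (Ioi (0:ℝ))), ∀ a' ∈ Metric.ball a 1, ‖F' a' x‖ ≤ bound x := by
    filter_upwards [ae_restrict_mem measurableSet_Ioi] with x hx a' _
    have hx0 : (0:ℝ) < x := hx
    have hE : Real.exp (-(a' * x / Real.sqrt 2) ^ 2) ≤ 1 :=
      Real.exp_le_one_iff.mpr (neg_nonpos.mpr (sq_nonneg _))
    have hkey : F' a' x = bound x * Real.exp (-(a' * x / Real.sqrt 2) ^ 2) := by
      simp only [hF', hbound]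
      field_simp
    rw [Real.norm_eq_abs, hkey, abs_mul, abs_of_pos (Real.exp_pos _),
      abs_of_nonneg (by positivity : (0:ℝ) ≤ bound x)]
    calc bound x * Real.exp (-(a' * x / Real.sqrt 2) ^ 2) ≤ bound x * 1 :=
          mul_le_mul_of_nonneg_left hE (by positivity)
      _ = bound x := mul_one _
  have main := hasDerivAt_integral_of_dominated_loc_of_deriv_le (F := fun a x =>
      x ^ 2 * erf (a * x / Real.sqrt 2) * Real.exp (-x ^ 2 / 2)) (F' := F') (x₀ := a)
      (Metric.ball_mem_nhds a one_pos) (Eventually.of_forall hmeas) hint hF'meas hb hboundint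
      (by filter_upwards with x a' _ using hderiv x a')
  have heq : (∫ x in Ioi (0:ℝ), F' a x) = Real.sqrt (2 / π) * (2 / (a ^ 2 + 1) ^ 2) := by
    have hbpos : (0:ℝ) < (a ^ 2 + 1) / 2 := by positivity
    have hptwise : ∀ x : ℝ, F' a x =
        2 / (Real.sqrt π * Real.sqrt 2) * (x ^ 3 * Real.exp (-((a ^ 2 + 1) / 2) * x ^ 2)) := by
      intro x
      have hA : Real.exp (-(a * x / Real.sqrt 2) ^ 2) * Real.exp (-x ^ 2 / 2)
          = Real.exp (-((a ^ 2 + 1) / 2) * x ^ 2) := by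
        rw [← Real.exp_add]
        congr 1
        rw [div_pow, hsq2]
        ring
      simp only [hF']
      calc x ^ 2 * (2 / Real.sqrt π * Real.exp (-(a * x / Real.sqrt 2) ^ 2) * (x / Real.sqrt 2)) *
            Real.exp (-x ^ 2 / 2)
          = 2 / (Real.sqrt π * Real.sqrt 2) * x ^ 3 *
              (Real.exp (-(a * x / Real.sqrt 2) ^ 2) * Real.exp (-x ^ 2 / 2)) := by
            field_simp
        _ = 2 / (Real.sqrt π * Real.sqrt 2) * (x ^ 3 * Real.exp (-((a ^ 2 + 1) / 2) * x ^ 2)) := by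
            rw [hA]; ring
    simp only [hptwise]
    rw [integral_const_mul, integral_x3 hbpos]
    have hsqrt : Real.sqrt (2 / π) = Real.sqrt 2 / Real.sqrt π :=
      Real.sqrt_div' 2 Real.pi_pos.le
    rw [hsqrt]
    have hA : (0:ℝ) < a ^ 2 + 1 := by positivity
    field_simp
    linear_combination -hsq2
  rw [← heq]
  exact main.2

lemma G_hasDerivAt (a : ℝ) :
    HasDerivAt (fun a : ℝ => Real.sqrt (2 / π) * (a / (a ^ 2 + 1) + Real.arctan a))
      (Real.sqrt (2 / π) * (2 / (a ^ 2 + 1) ^ 2)) a := by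
  have hA : (a:ℝ) ^ 2 + 1 ≠ 0 := by positivity
  have h1 : HasDerivAt (fun a : ℝ => a / (a ^ 2 + 1))
      ((1 * (a ^ 2 + 1) - a * (2 * a ^ 1)) / (a ^ 2 + 1) ^ 2) a :=
    (hasDerivAt_id a).div ((hasDerivAt_pow 2 a).add_const 1) hA
  have h2 := (h1.add (Real.hasDerivAt_arctan a)).const_mul (Real.sqrt (2 / π))
  refine h2.congr_deriv ?_
  congr 1
  have hB : (1:ℝ) + a ^ 2 ≠ 0 := by positivity
  field_simp
  ring

theorem stmt5 (a : ℝ) :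
    ∫ x in Ioi (0 : ℝ), x ^ 2 * erf (a * x / Real.sqrt 2) * Real.exp (-x ^ 2 / 2) =
      Real.sqrt (2 / π) * (a / (a ^ 2 + 1) + Real.arctan a) := by
  have key := is_const_of_deriv_eq_zero (𝕜 := ℝ)
    (f := fun b : ℝ => (∫ x in Ioi (0:ℝ), x ^ 2 * erf (b * x / Real.sqrt 2) *
        Real.exp (-x ^ 2 / 2)) - Real.sqrt (2 / π) * (b / (b ^ 2 + 1) + Real.arctan b))
    (fun b => ((F_hasDerivAt b).sub (G_hasDerivAt b)).differentiableAt)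
    (fun b => by
      have := ((F_hasDerivAt b).sub (G_hasDerivAt b)).deriv; exact this.trans (by ring)) a 0
  have h0 : (∫ x in Ioi (0:ℝ), x ^ 2 * erf (0 * x / Real.sqrt 2) * Real.exp (-x ^ 2 / 2)) = 0 := by
    simp [erf]
  simp only [h0, Real.arctan_zero] at key
  norm_num at key
  rw [show Real.sqrt (2 / π) = Real.sqrt 2 / Real.sqrt π from Real.sqrt_div' 2 Real.pi_pos.le]
  linarith [key]
end

section
/- Let h > 0 and let c < h be real. Then ∫₀^1 [ h (h − c) / (π θ^{3/2} (1 − θ)^{3/2}) ] · exp( − h²/(2θ) − (h − c)²/(2(1 − θ)) ) dθ = √(2/π) · (2h − c) · exp(−(2h − c)²/2). (Integrating the Shepp joint density of (argmax, max, close) over the argmax yields the joint density of (max, close).) -/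
open Real MeasureTheory Set


lemma rpow_three_halves {t : ℝ} (ht : 0 ≤ t) : (t^2 : ℝ) ^ ((3:ℝ)/2) = t^3 := by
  rw [← Real.rpow_natCast t 2, ← Real.rpow_mul ht, ← Real.rpow_natCast t 3]
  norm_num

lemma glasser (c : ℝ) (hc : 0 < c) :
    ∫ x in Ioi (0:ℝ), (1 + c/x^2) * Real.exp (-(x - c/x)^2/2) = Real.sqrt (2*π) := by
  have hderiv : ∀ x ∈ Ioi (0:ℝ), HasDerivWithinAt (fun x => x - c/x) (1 + c/x^2) (Ioi 0) x := by
    intro x hx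
    have hx0 : x ≠ 0 := ne_of_gt hx
    have h1 : HasDerivAt (fun x : ℝ => x - c * x⁻¹) (1 - c * (-(x^2)⁻¹)) x :=
      (hasDerivAt_id x).sub ((hasDerivAt_inv hx0).const_mul c)
    have h2 : (1 : ℝ) - c * (-(x^2)⁻¹) = 1 + c/x^2 := by field_simp; ring
    simpa [div_eq_mul_inv, h2] using h1.hasDerivWithinAt
  have hinj : InjOn (fun x => x - c/x) (Ioi (0:ℝ)) := by
    apply StrictMonoOn.injOn
    intro p hp q hq hpq
    simp only [mem_Ioi] at hp hq
    have : c/q < c/p := div_lt_div_of_pos_left hc hp hpq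
    simp only
    linarith
  have himg : (fun x => x - c/x) '' Ioi (0:ℝ) = univ := by
    ext y
    simp only [mem_image, mem_Ioi, mem_univ, iff_true]
    refine ⟨(y + Real.sqrt (y^2 + 4*c))/2, ?_, ?_⟩
    · have hs : Real.sqrt (y^2+4*c) ^ 2 = y^2 + 4*c := Real.sq_sqrt (by positivity)
      have hs0 : 0 ≤ Real.sqrt (y^2+4*c) := Real.sqrt_nonneg _
      nlinarith [abs_nonneg y, sq_abs y, le_abs_self y, neg_abs_le y]
    · have hs : Real.sqrt (y^2+4*c) ^ 2 = y^2 + 4*c := Real.sq_sqrt (by positivity)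
      have hs0 : 0 ≤ Real.sqrt (y^2+4*c) := Real.sqrt_nonneg _
      have hxpos : 0 < (y + Real.sqrt (y^2 + 4*c))/2 := by
        nlinarith [abs_nonneg y, sq_abs y, le_abs_self y, neg_abs_le y]
      have hcx : c/((y + Real.sqrt (y^2 + 4*c))/2) = (y + Real.sqrt (y^2 + 4*c))/2 - y := by
        rw [div_eq_iff hxpos.ne']
        nlinarith [hs]
      simp only [hcx]
      ring
  have := integral_image_eq_integral_abs_deriv_smul measurableSet_Ioi hderiv hinj
    (fun y => Real.exp (-y^2/2))
  rw [himg] at this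
  have hgauss : ∫ y : ℝ, Real.exp (-y^2/2) = Real.sqrt (2*π) := by
    have : ∀ y : ℝ, Real.exp (-y^2/2) = Real.exp (-(1/2) * y^2) := by intro y; ring_nf
    simp_rw [this, integral_gaussian]
    rw [show π/(1/2) = 2*π by ring]
  rw [Measure.restrict_univ, hgauss] at this
  rw [this]
  apply setIntegral_congr_fun measurableSet_Ioi
  intro x hx
  simp only [mem_Ioi] at hx
  have : |1 + c/x^2| = 1 + c/x^2 := abs_of_pos (by positivity)
  simp [this, smul_eq_mul]


lemma odd_zero (c : ℝ) (hc : 0 < c) :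
    ∫ x in Ioi (0:ℝ), (1 - c/x^2) * Real.exp (-(x + c/x)^2/2) = 0 := by
  set F : ℝ → ℝ := fun x => (1 - c/x^2) * Real.exp (-(x + c/x)^2/2) with hF
  have hderiv : ∀ x ∈ Ioi (0:ℝ), HasDerivWithinAt (fun x => c/x) (-c/x^2) (Ioi 0) x := by
    intro x hx
    have hx0 : x ≠ 0 := ne_of_gt hx
    have h1 : HasDerivAt (fun x : ℝ => c * x⁻¹) (c * (-(x^2)⁻¹)) x :=
      (hasDerivAt_inv hx0).const_mul c
    have h2 : c * (-(x^2)⁻¹) = -c/x^2 := by field_simp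
    simpa [div_eq_mul_inv, h2] using h1.hasDerivWithinAt
  have hinj : InjOn (fun x => c/x) (Ioi (0:ℝ)) := by
    intro p hp q hq hpq
    simp only [mem_Ioi] at hp hq
    simp only at hpq
    have : p * q ≠ 0 := by positivity
    field_simp at hpq
    exact hpq.symm
  have himg : (fun x => c/x) '' Ioi (0:ℝ) = Ioi 0 := by
    ext y
    simp only [mem_image, mem_Ioi]
    constructor
    · rintro ⟨x, hx, rfl⟩; positivity
    · intro hy; exact ⟨c/y, by positivity, by field_simp⟩
  have key := integral_image_eq_integral_abs_deriv_smul measurableSet_Ioi hderiv hinj F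
  rw [himg] at key
  have hptwise : ∀ x ∈ Ioi (0:ℝ), |-c/x^2| • F (c/x) = -F x := by
    intro x hx
    simp only [mem_Ioi] at hx
    have hx0 : x ≠ 0 := ne_of_gt hx
    have h1 : c/(c/x)^2 = x^2/c := by field_simp
    have h2 : c/x + c/(c/x) = x + c/x := by
      have : c/(c/x) = x := by field_simp
      rw [this]; ring
    have h3 : |(-c/x^2)| = c/x^2 := by
      rw [abs_div, abs_neg, abs_of_pos hc, abs_of_pos (by positivity : (0:ℝ) < x^2)]
    simp only [hF, h1, h2, h3, smul_eq_mul]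
    field_simp
    ring
  rw [setIntegral_congr_fun measurableSet_Ioi hptwise] at key
  rw [integral_neg] at key
  linarith

lemma glasser_int (c : ℝ) (hc : 0 < c) :
    IntegrableOn (fun x => (1 + c/x^2) * Real.exp (-(x - c/x)^2/2)) (Ioi (0:ℝ)) := by
  have hderiv : ∀ x ∈ Ioi (0:ℝ), HasDerivWithinAt (fun x => x - c/x) (1 + c/x^2) (Ioi 0) x := by
    intro x hx
    have hx0 : x ≠ 0 := ne_of_gt hx
    have h1 : HasDerivAt (fun x : ℝ => x - c * x⁻¹) (1 - c * (-(x^2)⁻¹)) x :=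
      (hasDerivAt_id x).sub ((hasDerivAt_inv hx0).const_mul c)
    have h2 : (1 : ℝ) - c * (-(x^2)⁻¹) = 1 + c/x^2 := by field_simp; ring
    simpa [div_eq_mul_inv, h2] using h1.hasDerivWithinAt
  have hinj : InjOn (fun x => x - c/x) (Ioi (0:ℝ)) := by
    apply StrictMonoOn.injOn
    intro p hp q hq hpq
    simp only [mem_Ioi] at hp hq
    have : c/q < c/p := div_lt_div_of_pos_left hc hp hpq
    simp only
    linarith
  have himg : (fun x => x - c/x) '' Ioi (0:ℝ) = univ := by
    ext y
    simp only [mem_image, mem_Ioi, mem_univ, iff_true]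
    refine ⟨(y + Real.sqrt (y^2 + 4*c))/2, ?_, ?_⟩
    · have hs : Real.sqrt (y^2+4*c) ^ 2 = y^2 + 4*c := Real.sq_sqrt (by positivity)
      have hs0 : 0 ≤ Real.sqrt (y^2+4*c) := Real.sqrt_nonneg _
      nlinarith [abs_nonneg y, sq_abs y, le_abs_self y, neg_abs_le y]
    · have hs : Real.sqrt (y^2+4*c) ^ 2 = y^2 + 4*c := Real.sq_sqrt (by positivity)
      have hs0 : 0 ≤ Real.sqrt (y^2+4*c) := Real.sqrt_nonneg _
      have hxpos : 0 < (y + Real.sqrt (y^2 + 4*c))/2 := by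
        nlinarith [abs_nonneg y, sq_abs y, le_abs_self y, neg_abs_le y]
      have hcx : c/((y + Real.sqrt (y^2 + 4*c))/2) = (y + Real.sqrt (y^2 + 4*c))/2 - y := by
        rw [div_eq_iff hxpos.ne']
        nlinarith [hs]
      simp only [hcx]
      ring
  have hint : IntegrableOn (fun y => Real.exp (-y^2/2)) ((fun x => x - c/x) '' Ioi (0:ℝ)) := by
    rw [himg]
    have : ∀ y : ℝ, Real.exp (-y^2/2) = Real.exp (-(1/2) * y^2) := by intro y; ring_nf
    simp_rw [IntegrableOn, Measure.restrict_univ, this]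
    exact integrable_exp_neg_mul_sq (by norm_num)
  have := (integrableOn_image_iff_integrableOn_abs_deriv_smul measurableSet_Ioi hderiv hinj
    (fun y => Real.exp (-y^2/2))).1 hint
  apply this.congr_fun ?_ measurableSet_Ioi
  intro x hx
  simp only [mem_Ioi] at hx
  simp only [smul_eq_mul]
  rw [abs_of_pos (by positivity : (0:ℝ) < 1 + c/x^2)]



lemma odd_int (c : ℝ) (hc : 0 < c) :
    IntegrableOn (fun x => (1 - c/x^2) * Real.exp (-(x + c/x)^2/2)) (Ioi (0:ℝ)) := by
  apply Integrable.mono (glasser_int c hc)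
  · apply ContinuousOn.aestronglyMeasurable ?_ measurableSet_Ioi
    apply ContinuousOn.mul
    · exact continuousOn_const.sub (continuousOn_const.div
        (continuous_pow 2).continuousOn (fun x hx => by
          simp only [mem_Ioi] at hx; positivity))
    · apply Real.continuous_exp.comp_continuousOn
      apply ContinuousOn.div_const
      apply ContinuousOn.neg
      apply ContinuousOn.pow
      exact continuousOn_id.add (continuousOn_const.div continuousOn_id
        (fun x hx => by simp only [mem_Ioi] at hx; exact ne_of_gt hx))
  · rw [ae_restrict_iff' measurableSet_Ioi]
    filter_upwards with x hx
    simp only [mem_Ioi] at hx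
    have hx0 : x ≠ 0 := ne_of_gt hx
    have hcx : x * (c/x) = c := by field_simp
    have h1 : |1 - c/x^2| ≤ 1 + c/x^2 := by
      have h0 : 0 ≤ c/x^2 := by positivity
      rw [abs_le]
      constructor <;> linarith
    have h2 : Real.exp (-(x + c/x)^2/2) ≤ Real.exp (-(x - c/x)^2/2) := by
      apply Real.exp_le_exp.mpr
      nlinarith [hcx]
    rw [Real.norm_eq_abs, Real.norm_eq_abs, abs_mul, abs_mul,
      Real.abs_exp, Real.abs_exp, abs_of_pos (by positivity : (0:ℝ) < 1 + c/x^2)]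
    calc |1 - c/x^2| * Real.exp (-(x + c/x)^2/2)
        ≤ (1 + c/x^2) * Real.exp (-(x + c/x)^2/2) := by
          apply mul_le_mul_of_nonneg_right h1 (Real.exp_nonneg _)
      _ ≤ (1 + c/x^2) * Real.exp (-(x - c/x)^2/2) := by
          apply mul_le_mul_of_nonneg_left h2 (by positivity)


lemma shepp_key (a b : ℝ) (ha : 0 < a) (hb : 0 < b) :
    ∫ θ in Ioo (0:ℝ) 1,
        a * b / (π * θ ^ ((3:ℝ)/2) * (1 - θ) ^ ((3:ℝ)/2)) *
          Real.exp (-a^2/(2*θ) - b^2/(2*(1-θ)))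
      = Real.sqrt (2/π) * (a + b) * Real.exp (-(a+b)^2/2) := by
  have hD : ∀ x : ℝ, (0:ℝ) < a^2 + x^2 := fun x => by positivity
  have hderiv : ∀ x ∈ Ioi (0:ℝ), HasDerivWithinAt (fun x => a^2/(a^2+x^2))
      (-(2*a^2*x)/(a^2+x^2)^2) (Ioi 0) x := by
    intro x hx
    have h1 : HasDerivAt (fun x : ℝ => a^2 + x^2) (2*x^(2-1)) x :=
      (hasDerivAt_pow 2 x).const_add (a^2)
    have h2 := (h1.inv (hD x).ne').const_mul (a^2)
    have h3 : a^2 * (-(2*x^(2-1)) / (a^2+x^2)^2) = -(2*a^2*x)/(a^2+x^2)^2 := by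
      norm_num; ring
    rw [h3] at h2
    simpa [div_eq_mul_inv] using h2.hasDerivWithinAt
  have hinj : InjOn (fun x => a^2/(a^2+x^2)) (Ioi (0:ℝ)) := by
    apply StrictAntiOn.injOn
    intro p hp q hq hpq
    simp only [mem_Ioi] at hp hq
    simp only
    exact div_lt_div_of_pos_left (by positivity) (by positivity) (by nlinarith)
  have himg : (fun x => a^2/(a^2+x^2)) '' Ioi (0:ℝ) = Ioo 0 1 := by
    ext y
    simp only [mem_image, mem_Ioi, mem_Ioo]
    constructor
    · rintro ⟨x, hx, rfl⟩
      refine ⟨by positivity, ?_⟩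
      rw [div_lt_one (hD x)]
      nlinarith
    · rintro ⟨hy0, hy1⟩
      have h1y : (0:ℝ) < 1 - y := by linarith
      have harg : 0 < a^2*(1-y)/y := div_pos (mul_pos (by positivity) h1y) hy0
      refine ⟨Real.sqrt (a^2*(1-y)/y), Real.sqrt_pos.mpr harg, ?_⟩
      have hs : Real.sqrt (a^2*(1-y)/y) ^ 2 = a^2*(1-y)/y := Real.sq_sqrt harg.le
      rw [hs]
      field_simp [ha.ne', hy0.ne']
      ring
  rw [show Ioo (0:ℝ) 1 = (fun x => a^2/(a^2+x^2)) '' Ioi 0 from himg.symm,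
    integral_image_eq_integral_abs_deriv_smul measurableSet_Ioi hderiv hinj]
  have hab : 0 < a*b := by positivity
  set C1 : ℝ := Real.exp (-(a+b)^2/2) * (a+b) / π with hC1
  set C2 : ℝ := Real.exp (-(a+b)^2/2) * Real.exp (2*(a*b)) * (b-a) / π with hC2
  have hpt : ∀ x ∈ Ioi (0:ℝ),
      |(-(2*a^2*x)/(a^2+x^2)^2)| • ((fun θ => a * b / (π * θ ^ ((3:ℝ)/2) * (1 - θ) ^ ((3:ℝ)/2)) *
          Real.exp (-a^2/(2*θ) - b^2/(2*(1-θ)))) (a^2/(a^2+x^2)))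
        = C1 * ((1 + a*b/x^2) * Real.exp (-(x - a*b/x)^2/2))
          + C2 * ((1 - a*b/x^2) * Real.exp (-(x + a*b/x)^2/2)) := by
    intro x hx
    simp only [mem_Ioi] at hx
    have hx0 : x ≠ 0 := ne_of_gt hx
    have habs : |(-(2*a^2*x)/(a^2+x^2)^2)| = 2*a^2*x/(a^2+x^2)^2 := by
      rw [abs_div, abs_neg, abs_of_pos (by positivity : (0:ℝ) < 2*a^2*x),
        abs_of_pos (by positivity : (0:ℝ) < (a^2+x^2)^2)]
    have hθ1 : 1 - a^2/(a^2+x^2) = x^2/(a^2+x^2) := by field_simp; ring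
    have hpow : (a^2/(a^2+x^2))^((3:ℝ)/2) * (x^2/(a^2+x^2))^((3:ℝ)/2)
        = (a*x/(a^2+x^2))^3 := by
      rw [← Real.mul_rpow (by positivity) (by positivity),
        show a^2/(a^2+x^2) * (x^2/(a^2+x^2)) = (a*x/(a^2+x^2))^2 by ring]
      exact rpow_three_halves (by positivity)
    have hexp : -a^2/(2*(a^2/(a^2+x^2))) - b^2/(2*(x^2/(a^2+x^2)))
        = -(a+b)^2/2 + -(x - a*b/x)^2/2 := by
      field_simp
      ring
    have hexp2 : -(x + a*b/x)^2/2 = -(x - a*b/x)^2/2 + -(2*(a*b)) := by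
      field_simp
      ring
    simp only [smul_eq_mul, habs, hθ1, hexp, Real.exp_add, mul_assoc π, hpow, hexp2,
      Real.exp_neg, hC1, hC2]
    have hπ : π ≠ 0 := pi_ne_zero
    have hE : Real.exp (2*(a*b)) ≠ 0 := Real.exp_ne_zero _
    have hax : a*x/(a^2+x^2) ≠ 0 := by positivity
    field_simp
    ring
  rw [setIntegral_congr_fun measurableSet_Ioi hpt]
  rw [integral_add ((glasser_int (a*b) hab).const_mul C1) ((odd_int (a*b) hab).const_mul C2),
    integral_const_mul, integral_const_mul, glasser (a*b) hab, odd_zero (a*b) hab]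
  have h2π : Real.sqrt (2*π) = Real.sqrt (2/π) * π := by
    rw [show (2:ℝ)*π = (2/π)*π^2 by field_simp,
      Real.sqrt_mul (by positivity) , Real.sqrt_sq pi_pos.le]
  rw [h2π, hC1]
  field_simp
  ring

theorem stmt14 (h c : ℝ) (hh : 0 < h) (hc : c < h) :
    ∫ θ in Ioo (0 : ℝ) 1,
        h * (h - c) / (π * θ ^ ((3 : ℝ) / 2) * (1 - θ) ^ ((3 : ℝ) / 2)) *
          Real.exp (-h ^ 2 / (2 * θ) - (h - c) ^ 2 / (2 * (1 - θ))) =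
      Real.sqrt (2 / π) * (2 * h - c) * Real.exp (-(2 * h - c) ^ 2 / 2) := by
  have key := shepp_key h (h - c) hh (by linarith)
  rw [show h + (h - c) = 2 * h - c by ring] at key
  exact key
end

section
/- Let 0 < θ < 1 and let c > 0. Then ∫_c^∞ [ h (h − c) / (π θ^{3/2} (1 − θ)^{3/2}) ] · exp( − h²/(2θ) − (h − c)²/(2(1 − θ)) ) dh = (c θ exp(−c²/(2θ))) / (π √(θ(1 − θ))) − ((c² − 1) exp(−c²/2) · erfc( |c| √((1 − θ)/(2θ)) )) / √(2π). (Joint density of the argmax and the close for a positive close.) -/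
open Real MeasureTheory Set
open Filter

noncomputable def erfc (z : ℝ) : ℝ := 1 - erf z

lemma int_sq_gauss {a : ℝ} (ha : 0 < a) :
    Integrable fun x : ℝ => x ^ 2 * Real.exp (-a * x ^ 2) := by
  have h := integrable_rpow_mul_exp_neg_mul_sq ha (s := 2) (by norm_num)
  have heq : (fun x : ℝ => x ^ (2:ℝ) * Real.exp (-a * x ^ 2))
      = fun x : ℝ => x ^ 2 * Real.exp (-a * x ^ 2) := by
    funext x
    rw [show (2:ℝ) = ((2:ℕ):ℝ) by norm_num, Real.rpow_natCast]
  rwa [heq] at h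

lemma tendsto_lin_gauss {a : ℝ} (ha : 0 < a) :
    Tendsto (fun x : ℝ => x * Real.exp (-a * x ^ 2)) atTop (nhds 0) := by
  have h := rpow_mul_exp_neg_mul_sq_isLittleO_exp_neg ha 1
  have heq : (fun x : ℝ => x ^ (1:ℝ) * Real.exp (-a * x ^ 2))
      = fun x : ℝ => x * Real.exp (-a * x ^ 2) := by
    funext x; rw [Real.rpow_one]
  rw [heq] at h
  refine h.trans_tendsto ?_
  have h2 : Tendsto (fun x : ℝ => -(1/2 : ℝ) * x) atTop atBot :=
    Tendsto.const_mul_atTop_of_neg (by norm_num) tendsto_id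
  exact Real.tendsto_exp_atBot.comp h2

lemma gaussJ1 {a : ℝ} (L : ℝ) (ha : 0 < a) :
    ∫ t in Ioi L, t * Real.exp (-a * t ^ 2) = Real.exp (-a * L ^ 2) / (2 * a) := by
  have hderiv : ∀ x ∈ Ici L, HasDerivAt (fun t : ℝ => -Real.exp (-a * t ^ 2) / (2 * a))
      (x * Real.exp (-a * x ^ 2)) x := by
    intro x _
    have h1 : HasDerivAt (fun t : ℝ => -a * t ^ 2) (-a * (2 * x)) x := by
      simpa using ((hasDerivAt_pow 2 x).const_mul (-a))
    have h2 := (h1.exp.neg).div_const (2 * a)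
    refine h2.congr_deriv ?_
    field_simp
  have htend : Tendsto (fun t : ℝ => -Real.exp (-a * t ^ 2) / (2 * a)) atTop (nhds 0) := by
    have : Tendsto (fun t : ℝ => Real.exp (-a * t ^ 2)) atTop (nhds 0) := by
      have h1 : Tendsto (fun t : ℝ => -a * t ^ 2) atTop atBot :=
        Tendsto.const_mul_atTop_of_neg (by linarith) (tendsto_pow_atTop (by norm_num))
      exact Real.tendsto_exp_atBot.comp h1
    simpa using (this.neg.div_const (2 * a))
  have := integral_Ioi_of_hasDerivAt_of_tendsto' hderiv
    ((integrable_mul_exp_neg_mul_sq ha).integrableOn) htend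
  rw [this]
  ring

lemma gaussJ2 {a : ℝ} (L : ℝ) (ha : 0 < a) :
    ∫ t in Ioi L, t ^ 2 * Real.exp (-a * t ^ 2)
      = L * Real.exp (-a * L ^ 2) / (2 * a)
        + (1 / (2 * a)) * ∫ t in Ioi L, Real.exp (-a * t ^ 2) := by
  have hderiv : ∀ x ∈ Ici L, HasDerivAt (fun t : ℝ => -(t * Real.exp (-a * t ^ 2)) / (2 * a))
      (x ^ 2 * Real.exp (-a * x ^ 2) - (1 / (2 * a)) * Real.exp (-a * x ^ 2)) x := by
    intro x _
    have h1 : HasDerivAt (fun t : ℝ => -a * t ^ 2) (-a * (2 * x)) x := by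
      simpa using ((hasDerivAt_pow 2 x).const_mul (-a))
    have h2 := (((hasDerivAt_id x).mul h1.exp).neg).div_const (2 * a)
    refine h2.congr_deriv ?_
    simp only [id]
    field_simp
    ring
  have htend : Tendsto (fun t : ℝ => -(t * Real.exp (-a * t ^ 2)) / (2 * a)) atTop (nhds 0) := by
    simpa using ((tendsto_lin_gauss ha).neg.div_const (2 * a))
  have hint : IntegrableOn
      (fun x : ℝ => x ^ 2 * Real.exp (-a * x ^ 2) - (1 / (2 * a)) * Real.exp (-a * x ^ 2))
      (Ioi L) :=
    ((int_sq_gauss ha).sub ((integrable_exp_neg_mul_sq ha).const_mul _)).integrableOn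
  have key := integral_Ioi_of_hasDerivAt_of_tendsto' hderiv hint htend
  rw [integral_sub ((int_sq_gauss ha).integrableOn)
    (((integrable_exp_neg_mul_sq ha).const_mul _).integrableOn)] at key
  rw [integral_const_mul] at key
  have : (0:ℝ) - -(L * Real.exp (-a * L ^ 2)) / (2 * a) = L * Real.exp (-a * L ^ 2) / (2 * a) := by
    ring
  rw [this] at key
  linarith [key]

lemma gaussJ0 {a : ℝ} (L : ℝ) (ha : 0 < a) (hL : 0 ≤ L) :
    ∫ t in Ioi L, Real.exp (-a * t ^ 2)
      = Real.sqrt (π / a) / 2 * erfc (Real.sqrt a * L) := by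
  have hsa : 0 < Real.sqrt a := Real.sqrt_pos.mpr ha
  have hsplit : ∫ t in Ioi (0:ℝ), Real.exp (-a * t ^ 2)
      = (∫ t in Ioc 0 L, Real.exp (-a * t ^ 2)) + ∫ t in Ioi L, Real.exp (-a * t ^ 2) := by
    rw [← Ioc_union_Ioi_eq_Ioi hL]
    exact setIntegral_union Ioc_disjoint_Ioi_same measurableSet_Ioi
      ((integrable_exp_neg_mul_sq ha).integrableOn)
      ((integrable_exp_neg_mul_sq ha).integrableOn)
  have h0 : ∫ t in Ioi (0:ℝ), Real.exp (-a * t ^ 2) = Real.sqrt (π / a) / 2 :=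
    integral_gaussian_Ioi a
  have hIoc : ∫ t in Ioc 0 L, Real.exp (-a * t ^ 2)
      = (Real.sqrt a)⁻¹ * ∫ u in (0:ℝ)..(Real.sqrt a * L), Real.exp (-u ^ 2) := by
    rw [← intervalIntegral.integral_of_le hL]
    have := intervalIntegral.integral_comp_mul_left
      (f := fun u : ℝ => Real.exp (-u ^ 2)) (a := (0:ℝ)) (b := L) (c := Real.sqrt a)
      (ne_of_gt hsa)
    rw [mul_zero, smul_eq_mul] at this
    rw [← this]
    apply intervalIntegral.integral_congr
    intro x _
    simp only
    congr 1
    rw [mul_pow, Real.sq_sqrt ha.le]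
    ring
  have hπ : 0 < Real.sqrt π := Real.sqrt_pos.mpr Real.pi_pos
  have hsqdiv : Real.sqrt (π / a) = Real.sqrt π / Real.sqrt a := Real.sqrt_div Real.pi_pos.le a
  have : ∫ t in Ioi L, Real.exp (-a * t ^ 2)
      = Real.sqrt (π / a) / 2 - (Real.sqrt a)⁻¹ * ∫ u in (0:ℝ)..(Real.sqrt a * L),
        Real.exp (-u ^ 2) := by
    rw [← hIoc]; linarith [hsplit, h0]
  rw [this, erfc, erf]
  rw [hsqdiv]
  have hπne : Real.sqrt π ≠ 0 := ne_of_gt hπ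
  have hsane : Real.sqrt a ≠ 0 := ne_of_gt hsa
  field_simp

theorem stmt15 (θ c : ℝ) (hθ0 : 0 < θ) (hθ1 : θ < 1) (hc : 0 < c) :
    ∫ h in Ioi c,
        h * (h - c) / (π * θ ^ ((3 : ℝ) / 2) * (1 - θ) ^ ((3 : ℝ) / 2)) *
          Real.exp (-h ^ 2 / (2 * θ) - (h - c) ^ 2 / (2 * (1 - θ))) =
      c * θ * Real.exp (-c ^ 2 / (2 * θ)) / (π * Real.sqrt (θ * (1 - θ))) -
        (c ^ 2 - 1) * Real.exp (-c ^ 2 / 2) *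
            erfc (|c| * Real.sqrt ((1 - θ) / (2 * θ))) / Real.sqrt (2 * π) := by
  have h1θ : 0 < 1 - θ := by linarith
  have hσ : 0 < θ * (1 - θ) := mul_pos hθ0 h1θ
  have ha : 0 < 1 / (2 * (θ * (1 - θ))) := by positivity
  have hL : (0:ℝ) ≤ (1 - θ) * c := by positivity
  -- pointwise rewriting of the integrand
  have hexp : ∀ h : ℝ,
      Real.exp (-h ^ 2 / (2 * θ) - (h - c) ^ 2 / (2 * (1 - θ)))
        = Real.exp (-c ^ 2 / 2) *
            Real.exp (-(1 / (2 * (θ * (1 - θ)))) * (h - θ * c) ^ 2) := by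
    intro h
    rw [← Real.exp_add]
    congr 1
    field_simp
    ring
  have hpt : ∀ h : ℝ,
      h * (h - c) / (π * θ ^ ((3 : ℝ) / 2) * (1 - θ) ^ ((3 : ℝ) / 2)) *
          Real.exp (-h ^ 2 / (2 * θ) - (h - c) ^ 2 / (2 * (1 - θ)))
        = (Real.exp (-c ^ 2 / 2) / (π * θ ^ ((3 : ℝ) / 2) * (1 - θ) ^ ((3 : ℝ) / 2))) *
            ((h - θ * c) ^ 2 * Real.exp (-(1 / (2 * (θ * (1 - θ)))) * (h - θ * c) ^ 2)
              + ((2 * θ - 1) * c) *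
                  ((h - θ * c) * Real.exp (-(1 / (2 * (θ * (1 - θ)))) * (h - θ * c) ^ 2))
              + (-(θ * (1 - θ)) * c ^ 2) *
                  Real.exp (-(1 / (2 * (θ * (1 - θ)))) * (h - θ * c) ^ 2)) := by
    intro h
    rw [hexp h]
    ring
  rw [integral_congr_ae (Filter.Eventually.of_forall fun h => hpt h)]
  -- shift the integration variable
  have hshift : (∫ h in Ioi c,
      (Real.exp (-c ^ 2 / 2) / (π * θ ^ ((3 : ℝ) / 2) * (1 - θ) ^ ((3 : ℝ) / 2))) *
        ((h - θ * c) ^ 2 * Real.exp (-(1 / (2 * (θ * (1 - θ)))) * (h - θ * c) ^ 2)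
          + ((2 * θ - 1) * c) *
              ((h - θ * c) * Real.exp (-(1 / (2 * (θ * (1 - θ)))) * (h - θ * c) ^ 2))
          + (-(θ * (1 - θ)) * c ^ 2) *
              Real.exp (-(1 / (2 * (θ * (1 - θ)))) * (h - θ * c) ^ 2)))
      = ∫ t in Ioi ((1 - θ) * c),
      (Real.exp (-c ^ 2 / 2) / (π * θ ^ ((3 : ℝ) / 2) * (1 - θ) ^ ((3 : ℝ) / 2))) *
        (t ^ 2 * Real.exp (-(1 / (2 * (θ * (1 - θ)))) * t ^ 2)
          + ((2 * θ - 1) * c) * (t * Real.exp (-(1 / (2 * (θ * (1 - θ)))) * t ^ 2))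
          + (-(θ * (1 - θ)) * c ^ 2) * Real.exp (-(1 / (2 * (θ * (1 - θ)))) * t ^ 2)) := by
    have hmp := measurePreserving_sub_right (volume : Measure ℝ) (θ * c)
    have hme : MeasurableEmbedding (fun x : ℝ => x - θ * c) :=
      (MeasurableEquiv.subRight (θ * c)).measurableEmbedding
    have hkey := hmp.setIntegral_preimage_emb hme
      (fun t : ℝ =>
        (Real.exp (-c ^ 2 / 2) / (π * θ ^ ((3 : ℝ) / 2) * (1 - θ) ^ ((3 : ℝ) / 2))) *
          (t ^ 2 * Real.exp (-(1 / (2 * (θ * (1 - θ)))) * t ^ 2)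
            + ((2 * θ - 1) * c) * (t * Real.exp (-(1 / (2 * (θ * (1 - θ)))) * t ^ 2))
            + (-(θ * (1 - θ)) * c ^ 2) * Real.exp (-(1 / (2 * (θ * (1 - θ)))) * t ^ 2)))
      (Ioi ((1 - θ) * c))
    rw [← hkey]
    have hpre : (fun x : ℝ => x - θ * c) ⁻¹' (Ioi ((1 - θ) * c)) = Ioi c := by
      ext x
      simp only [mem_preimage, mem_Ioi]
      constructor <;> intro hx <;> nlinarith
    rw [hpre]
  rw [hshift]
  rw [integral_const_mul]
  -- split the integral
  have I2 : IntegrableOn (fun t : ℝ => t ^ 2 * Real.exp (-(1 / (2 * (θ * (1 - θ)))) * t ^ 2))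
      (Ioi ((1 - θ) * c)) := (int_sq_gauss ha).integrableOn
  have I1 : IntegrableOn (fun t : ℝ =>
      ((2 * θ - 1) * c) * (t * Real.exp (-(1 / (2 * (θ * (1 - θ)))) * t ^ 2)))
      (Ioi ((1 - θ) * c)) := ((integrable_mul_exp_neg_mul_sq ha).const_mul _).integrableOn
  have I0 : IntegrableOn (fun t : ℝ =>
      (-(θ * (1 - θ)) * c ^ 2) * Real.exp (-(1 / (2 * (θ * (1 - θ)))) * t ^ 2))
      (Ioi ((1 - θ) * c)) := ((integrable_exp_neg_mul_sq ha).const_mul _).integrableOn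
  have I21 : IntegrableOn (fun t : ℝ =>
      t ^ 2 * Real.exp (-(1 / (2 * (θ * (1 - θ)))) * t ^ 2)
        + ((2 * θ - 1) * c) * (t * Real.exp (-(1 / (2 * (θ * (1 - θ)))) * t ^ 2)))
      (Ioi ((1 - θ) * c)) := I2.add I1
  rw [integral_add I21 I0, integral_add I2 I1, integral_const_mul, integral_const_mul]
  rw [gaussJ1 _ ha, gaussJ2 _ ha, gaussJ0 _ ha hL]
  -- algebraic identities
  have hrw3 : π * θ ^ ((3 : ℝ) / 2) * (1 - θ) ^ ((3 : ℝ) / 2)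
      = π * ((θ * (1 - θ)) * Real.sqrt (θ * (1 - θ))) := by
    rw [show (3:ℝ)/2 = 1 + 1/2 by norm_num, Real.rpow_add hθ0, Real.rpow_add h1θ,
      Real.rpow_one, Real.rpow_one, ← Real.sqrt_eq_rpow, ← Real.sqrt_eq_rpow,
      Real.sqrt_mul hθ0.le]
    ring
  have harg : Real.sqrt (1 / (2 * (θ * (1 - θ)))) * ((1 - θ) * c)
      = c * Real.sqrt ((1 - θ) / (2 * θ)) := by
    have h1 : (1 - θ) * Real.sqrt (1 / (2 * (θ * (1 - θ)))) = Real.sqrt ((1 - θ) / (2 * θ)) := by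
      nth_rewrite 1 [← Real.sqrt_sq h1θ.le]
      rw [← Real.sqrt_mul (sq_nonneg _)]
      congr 1
      field_simp
    rw [← h1]
    ring
  have hsqpa : Real.sqrt (π / (1 / (2 * (θ * (1 - θ)))))
      = Real.sqrt (2 * π) * Real.sqrt (θ * (1 - θ)) := by
    rw [← Real.sqrt_mul (by positivity)]
    congr 1
    field_simp
  have hexpL : Real.exp (-c ^ 2 / (2 * θ))
      = Real.exp (-c ^ 2 / 2) * Real.exp (-(1 / (2 * (θ * (1 - θ)))) * ((1 - θ) * c) ^ 2) := by
    rw [← Real.exp_add]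
    congr 1
    field_simp
    ring
  rw [hrw3, harg, hsqpa, hexpL, abs_of_pos hc]
  -- final algebra
  have hs2 : Real.sqrt (θ * (1 - θ)) ^ 2 = θ * (1 - θ) := Real.sq_sqrt hσ.le
  have hq2 : Real.sqrt (2 * π) ^ 2 = 2 * π := Real.sq_sqrt (by positivity)
  have hspos : 0 < Real.sqrt (θ * (1 - θ)) := Real.sqrt_pos.mpr hσ
  have hqpos : 0 < Real.sqrt (2 * π) := Real.sqrt_pos.mpr (by positivity)
  generalize Real.sqrt (θ * (1 - θ)) = s at hs2 hspos ⊢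
  generalize Real.sqrt (2 * π) = q at hq2 hqpos ⊢
  generalize erfc (c * Real.sqrt ((1 - θ) / (2 * θ))) = R
  generalize Real.exp (-c ^ 2 / 2) = E2
  generalize Real.exp (-(1 / (2 * (θ * (1 - θ)))) * ((1 - θ) * c) ^ 2) = EL
  rw [← hs2, show π = q ^ 2 / 2 by linarith]
  field_simp
  ring
end
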